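/- Let s ≥ 1 and let a_1, …, a_s, b_1, …, b_s be nonnegative real numbers such that (a_k, b_k) ≠ (0,0) for every 1 ≤ k ≤ s. Then for every t ≥ 0 and every choice of column indices j_0 < j_1 < ⋯ < j_t in ℕ, there exist row indices i_0 < i_1 < ⋯ < i_t in ℕ with j_0 ≤ i_0 and i_t ≤ j_t + s such that the determinant of the (t+1) × (t+1) submatrix ((W_s(a,b))_{i_r, j_{r'}})_{0 ≤ r, r' ≤ t} of the weighted path matrix W_s(a,b) is strictly positive. -/

import Mathlib

/-- The weighted path matrix `W_s(a,b)`, indexed by `ℕ × ℕ`, whose `(p,q)` entry is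
`Σ_{K ⊆ {1,…,s}, |K| = p−q} (Π_{k∈K} a_k)·(Π_{k∉K} b_k)` (zero unless `0 ≤ p−q ≤ s`). -/
noncomputable def weightedPathMatrix (s : ℕ) (a b : Fin s → ℝ) : ℕ → ℕ → ℝ :=
  fun p q =>
    ∑ K ∈ Finset.univ.filter (fun K : Finset (Fin s) => K.card + q = p),
      (∏ k ∈ K, a k) * (∏ k ∈ Kᶜ, b k)

open Polynomial Finset in
lemma wpm_eq_coeff (s : ℕ) (a b : Fin s → ℝ) (p q : ℕ) :
    weightedPathMatrix s a b p q =
      if q ≤ p then (∏ k : Fin s, (C (b k) + C (a k) * X)).coeff (p - q) else 0 := by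
  have hprod : (∏ k : Fin s, (C (b k) + C (a k) * X)) =
      ∑ K : Finset (Fin s), C ((∏ k ∈ K, a k) * (∏ k ∈ Kᶜ, b k)) * X ^ K.card := by
    have h1 : (∏ k : Fin s, (C (b k) + C (a k) * X))
        = ∏ k : Fin s, (C (a k) * X + C (b k)) := by
      apply Finset.prod_congr rfl; intros; ring
    rw [h1, Fintype.prod_add]
    apply Finset.sum_congr rfl; intro K _
    rw [Finset.prod_mul_distrib, Finset.prod_const, map_mul,
      ← map_prod (Polynomial.C : ℝ →+* ℝ[X]), ← map_prod (Polynomial.C : ℝ →+* ℝ[X])]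
    ring
  have hcoeff : ∀ m : ℕ, (∏ k : Fin s, (C (b k) + C (a k) * X)).coeff m =
      ∑ K : Finset (Fin s), if K.card = m then (∏ k ∈ K, a k) * (∏ k ∈ Kᶜ, b k) else 0 := by
    intro m
    rw [hprod, Polynomial.finset_sum_coeff]
    apply Finset.sum_congr rfl; intro K _
    rw [Polynomial.coeff_C_mul, Polynomial.coeff_X_pow]
    by_cases h : K.card = m
    · simp [h]
    · simp [h, Ne.symm h]
  rw [weightedPathMatrix, Finset.sum_filter]
  by_cases h : q ≤ p
  · rw [if_pos h, hcoeff]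
    apply Finset.sum_congr rfl; intro K _
    have : (K.card + q = p) ↔ (K.card = p - q) := by omega
    simp [this]
  · rw [if_neg h]
    apply Finset.sum_eq_zero; intro K _
    have : ¬ (K.card + q = p) := by omega
    simp [this]

open Polynomial Finset in
lemma wpm_zero (a b : Fin 0 → ℝ) (p q : ℕ) :
    weightedPathMatrix 0 a b p q = if p = q then 1 else 0 := by
  rw [wpm_eq_coeff]
  simp only [Finset.univ_eq_empty, Finset.prod_empty, Polynomial.coeff_one]
  by_cases h : q ≤ p
  · by_cases h2 : p = q
    · have : p - q = 0 := by omega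
      simp [h, h2, this]
    · have : ¬ (p - q = 0) := by omega
      simp [h, h2, this]
  · have : ¬ (p = q) := by omega
    simp [h, this]

open Polynomial Finset in
lemma wpm_succ (s : ℕ) (a b : Fin (s+1) → ℝ) (p q : ℕ) :
    weightedPathMatrix (s+1) a b p q
      = b (Fin.last s) * weightedPathMatrix s (a ∘ Fin.castSucc) (b ∘ Fin.castSucc) p q
        + a (Fin.last s) * weightedPathMatrix s (a ∘ Fin.castSucc) (b ∘ Fin.castSucc) p (q+1) := by
  rw [wpm_eq_coeff, wpm_eq_coeff, wpm_eq_coeff]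
  have hQ : (∏ k : Fin (s+1), (C (b k) + C (a k) * X))
      = (∏ k : Fin s, (C ((b ∘ Fin.castSucc) k) + C ((a ∘ Fin.castSucc) k) * X))
        * (C (b (Fin.last s)) + C (a (Fin.last s)) * X) := Fin.prod_univ_castSucc _
  set P := ∏ k : Fin s, (C ((b ∘ Fin.castSucc) k) + C ((a ∘ Fin.castSucc) k) * X) with hP
  by_cases h1 : q ≤ p
  · by_cases h2 : q + 1 ≤ p
    · rw [if_pos h1, if_pos h1, if_pos h2, hQ]
      have hm : p - q = (p - (q+1)) + 1 := by omega
      rw [hm, mul_add, coeff_add, coeff_mul_C, ← mul_assoc, coeff_mul_X, coeff_mul_C]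
      ring
    · have hpq : p = q := by omega
      have h0 : p - q = 0 := by omega
      rw [if_pos h1, if_pos h1, if_neg h2, hQ, h0, mul_add, coeff_add, coeff_mul_C,
        ← mul_assoc, mul_coeff_zero, coeff_X_zero]
      ring
  · have h2 : ¬ (q + 1 ≤ p) := by omega
    rw [if_neg h1, if_neg h1, if_neg h2]
    ring

open Finset in
lemma det_expand (s : ℕ) (a b : Fin (s+1) → ℝ) (n : ℕ) (I J : Fin n → ℕ) :
    (Matrix.of fun r c : Fin n => weightedPathMatrix (s+1) a b (I r) (J c)).det =
    ∑ S : Finset (Fin n),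
      (∏ c : Fin n, if c ∈ S then b (Fin.last s) else a (Fin.last s)) *
      (Matrix.of fun r c : Fin n =>
        weightedPathMatrix s (a ∘ Fin.castSucc) (b ∘ Fin.castSucc) (I r)
          (if c ∈ S then J c else J c + 1)).det := by
  classical
  set a₀ := a ∘ Fin.castSucc
  set b₀ := b ∘ Fin.castSucc
  set bl := b (Fin.last s)
  set al := a (Fin.last s)
  set u : Fin n → Fin n → ℝ := fun c r => weightedPathMatrix s a₀ b₀ (I r) (J c) with hu
  set v : Fin n → Fin n → ℝ := fun c r => weightedPathMatrix s a₀ b₀ (I r) (J c + 1) with hv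
  rw [← Matrix.det_transpose]
  have hM : Matrix.transpose (Matrix.of fun r c : Fin n => weightedPathMatrix (s+1) a b (I r) (J c))
      = (fun c => bl • u c) + (fun c => al • v c) := by
    funext c r
    simp only [Matrix.transpose_apply, Matrix.of_apply, Pi.add_apply, Pi.smul_apply,
      smul_eq_mul, hu, hv]
    exact wpm_succ s a b (I r) (J c)
  rw [hM]
  have expand := (Matrix.detRowAlternating (R := ℝ) (n := Fin n)).toMultilinearMap.map_add_univ
    (fun c => bl • u c) (fun c => al • v c)
  simp only [AlternatingMap.coe_multilinearMap] at expand
  show (Matrix.detRowAlternating ((fun c => bl • u c) + (fun c => al • v c))) = _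
  rw [expand]
  apply Finset.sum_congr rfl
  intro S _
  have hpw : S.piecewise (fun c => bl • u c) (fun c => al • v c)
      = fun c => (if c ∈ S then bl else al) • (if c ∈ S then u c else v c) := by
    funext c
    by_cases h : c ∈ S <;> simp [Finset.piecewise, h]
  have hsm := (Matrix.detRowAlternating (R := ℝ) (n := Fin n)).toMultilinearMap.map_smul_univ
    (fun c => if c ∈ S then bl else al) (fun c => if c ∈ S then u c else v c)
  simp only [AlternatingMap.coe_multilinearMap] at hsm
  show Matrix.detRowAlternating _ = _
  rw [hpw, hsm, smul_eq_mul]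
  congr 1
  have h1 : (fun c => if c ∈ S then u c else v c)
      = Matrix.of (fun c r : Fin n => if c ∈ S then u c r else v c r) := by
    funext c r
    by_cases h : c ∈ S <;> simp [h]
  rw [h1]
  show (Matrix.of fun c r : Fin n => if c ∈ S then u c r else v c r).det = _
  rw [← Matrix.det_transpose]
  congr 1
  funext r c
  simp only [Matrix.transpose_apply, Matrix.of_apply]
  by_cases h : c ∈ S <;> simp [h, hu, hv]

open Finset in
lemma det_ite_nonneg (n : ℕ) (I J : Fin n → ℕ) (hI : Monotone I) (hJ : Monotone J) :
    0 ≤ (Matrix.of fun r c : Fin n => if I r = J c then (1:ℝ) else 0).det := by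
  classical
  by_cases hIinj : Function.Injective I
  swap
  · obtain ⟨r, r', heq, hne⟩ := Function.not_injective_iff.mp hIinj
    refine ge_of_eq (Matrix.det_zero_of_row_eq hne ?_)
    funext c; simp [heq]
  by_cases hJinj : Function.Injective J
  swap
  · obtain ⟨c, c', heq, hne⟩ := Function.not_injective_iff.mp hJinj
    refine ge_of_eq (Matrix.det_zero_of_column_eq hne fun r => ?_)
    simp [heq]
  by_cases hrow : ∀ r, ∃ c, I r = J c
  swap
  · push_neg at hrow
    obtain ⟨r, hr⟩ := hrow
    refine ge_of_eq (Matrix.det_eq_zero_of_row_eq_zero r fun c => ?_)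
    simp [hr c]
  have hsI : StrictMono I := hI.strictMono_of_injective hIinj
  have hsJ : StrictMono J := hJ.strictMono_of_injective hJinj
  set T : Finset ℕ := Finset.image J Finset.univ with hT
  have hTc : T.card = n := by
    rw [hT, Finset.card_image_of_injective _ hJinj, Finset.card_univ, Fintype.card_fin]
  have hIT : ∀ x, I x ∈ T := by
    intro x
    obtain ⟨c, hc⟩ := hrow x
    rw [hc, hT]
    exact Finset.mem_image_of_mem _ (Finset.mem_univ _)
  have hJT : ∀ x, J x ∈ T := fun x => Finset.mem_image_of_mem _ (Finset.mem_univ _)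
  have hIJ : I = J := by
    rw [Finset.orderEmbOfFin_unique hTc hIT hsI, Finset.orderEmbOfFin_unique hTc hJT hsJ]
  have hone : (Matrix.of fun r c : Fin n => if I r = J c then (1:ℝ) else 0) = 1 := by
    ext r c
    rw [hIJ]
    simp [Matrix.one_apply, hJinj.eq_iff]
  rw [hone, Matrix.det_one]
  norm_num

lemma wpm_tnn : ∀ (s : ℕ) (a b : Fin s → ℝ), (∀ k, 0 ≤ a k) → (∀ k, 0 ≤ b k) →
    ∀ (n : ℕ) (I J : Fin n → ℕ), Monotone I → Monotone J →
    0 ≤ (Matrix.of fun r c : Fin n => weightedPathMatrix s a b (I r) (J c)).det := by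
  intro s
  induction s with
  | zero =>
    intro a b _ _ n I J hI hJ
    have : (Matrix.of fun r c : Fin n => weightedPathMatrix 0 a b (I r) (J c))
        = (Matrix.of fun r c : Fin n => if I r = J c then (1:ℝ) else 0) := by
      ext r c
      simp [wpm_zero]
    rw [this]
    exact det_ite_nonneg n I J hI hJ
  | succ s IH =>
    intro a b ha hb n I J hI hJ
    classical
    by_cases hJinj : Function.Injective J
    swap
    · obtain ⟨c, c', heq, hne⟩ := Function.not_injective_iff.mp hJinj
      refine ge_of_eq (Matrix.det_zero_of_column_eq hne fun r => ?_)
      simp [heq]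
    have hsJ : StrictMono J := hJ.strictMono_of_injective hJinj
    rw [det_expand]
    apply Finset.sum_nonneg
    intro S _
    apply mul_nonneg
    · apply Finset.prod_nonneg
      intro c _
      split
      · exact hb _
      · exact ha _
    · apply IH _ _ (fun k => ha _) (fun k => hb _) n I _ hI
      intro c c' hle
      rcases eq_or_lt_of_le hle with h | h
      · rw [h]
      · have := hsJ h
        by_cases h1 : c ∈ S <;> by_cases h2 : c' ∈ S <;> simp [h1, h2] <;> omega

lemma wpm_pos : ∀ (s : ℕ) (a b : Fin s → ℝ), (∀ k, 0 ≤ a k) → (∀ k, 0 ≤ b k) →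
    (∀ k, ¬(a k = 0 ∧ b k = 0)) →
    ∀ (n : ℕ) (J : Fin n → ℕ), StrictMono J →
    0 < (Matrix.of fun r c : Fin n =>
      weightedPathMatrix s a b
        (J r + (Finset.univ.filter (fun k => b k = 0)).card) (J c)).det := by
  intro s
  induction s with
  | zero =>
    intro a b _ _ _ n J hJ
    have hd : (Finset.univ.filter (fun k : Fin 0 => b k = 0)).card = 0 := by simp
    have : (Matrix.of fun r c : Fin n =>
        weightedPathMatrix 0 a b (J r + (Finset.univ.filter (fun k => b k = 0)).card) (J c))
        = 1 := by
      ext r c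
      simp only [Matrix.of_apply]
      rw [hd, wpm_zero]
      simp only [Nat.add_zero, Matrix.one_apply, hJ.injective.eq_iff]
    rw [this, Matrix.det_one]
    norm_num
  | succ s IH =>
    intro a b ha hb hab n J hJ
    classical
    set a₀ := a ∘ Fin.castSucc with ha₀
    set b₀ := b ∘ Fin.castSucc with hb₀
    set d := (Finset.univ.filter (fun k : Fin (s+1) => b k = 0)).card with hdd
    set d₀ := (Finset.univ.filter (fun k : Fin s => b₀ k = 0)).card with hd₀
    have hd : d = d₀ + (if b (Fin.last s) = 0 then 1 else 0) := by
      rw [hdd, hd₀, Finset.card_filter, Finset.card_filter, Fin.sum_univ_castSucc]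
      rfl
    have hI : Monotone fun r => J r + d := by
      intro r r' h
      have := hJ.monotone h
      dsimp only
      omega
    -- nonnegativity of each term of the expansion
    have hterm : ∀ S : Finset (Fin n),
        0 ≤ (∏ c : Fin n, if c ∈ S then b (Fin.last s) else a (Fin.last s)) *
          (Matrix.of fun r c : Fin n =>
            weightedPathMatrix s a₀ b₀ ((fun r => J r + d) r)
              (if c ∈ S then J c else J c + 1)).det := by
      intro S
      apply mul_nonneg
      · apply Finset.prod_nonneg
        intro c _
        split
        · exact hb _
        · exact ha _
      · apply wpm_tnn s a₀ b₀ (fun k => ha _) (fun k => hb _) n _ _ hI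
        intro c c' hle
        rcases eq_or_lt_of_le hle with h | h
        · rw [h]
        · have := hJ h
          by_cases h1 : c ∈ S <;> by_cases h2 : c' ∈ S <;> simp [h1, h2] <;> omega
    rw [det_expand s a b n (fun r => J r + d) J]
    by_cases hbl : b (Fin.last s) = 0
    · have hal : 0 < a (Fin.last s) :=
        (ha _).lt_of_ne fun h => hab _ ⟨h.symm, hbl⟩
      have hd1 : d = d₀ + 1 := by rw [hd, if_pos hbl]
      refine lt_of_lt_of_le ?_
        (Finset.single_le_sum (fun S _ => hterm S) (Finset.mem_univ (∅ : Finset (Fin n))))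
      have hcoef : (∏ c : Fin n, if c ∈ (∅ : Finset (Fin n)) then b (Fin.last s)
          else a (Fin.last s)) = a (Fin.last s) ^ n := by
        simp [Finset.prod_const]
      rw [hcoef]
      apply mul_pos (pow_pos hal n)
      have hmat : (Matrix.of fun r c : Fin n =>
          weightedPathMatrix s a₀ b₀ (J r + d)
            (if c ∈ (∅ : Finset (Fin n)) then J c else J c + 1))
          = (Matrix.of fun r c : Fin n =>
          weightedPathMatrix s a₀ b₀ ((fun x => J x + 1) r + d₀) ((fun x => J x + 1) c)) := by
        ext r c
        simp only [Finset.notMem_empty, if_false, Matrix.of_apply]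
        congr 1
        omega
      rw [hmat]
      refine IH a₀ b₀ (fun k => ha _) (fun k => hb _) (fun k => hab _) n
        (fun x => J x + 1) ?_
      intro x y h
      have := hJ h
      dsimp only
      omega
    · have hbl' : 0 < b (Fin.last s) := (hb _).lt_of_ne (Ne.symm hbl)
      have hd1 : d = d₀ := by rw [hd, if_neg hbl]; omega
      refine lt_of_lt_of_le ?_
        (Finset.single_le_sum (fun S _ => hterm S)
          (Finset.mem_univ (Finset.univ : Finset (Fin n))))
      have hcoef : (∏ c : Fin n, if c ∈ (Finset.univ : Finset (Fin n)) then b (Fin.last s)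
          else a (Fin.last s)) = b (Fin.last s) ^ n := by
        simp [Finset.prod_const]
      rw [hcoef]
      apply mul_pos (pow_pos hbl' n)
      have hmat : (Matrix.of fun r c : Fin n =>
          weightedPathMatrix s a₀ b₀ (J r + d)
            (if c ∈ (Finset.univ : Finset (Fin n)) then J c else J c + 1))
          = (Matrix.of fun r c : Fin n =>
          weightedPathMatrix s a₀ b₀ (J r + d₀) (J c)) := by
        ext r c
        simp only [Finset.mem_univ, if_true, Matrix.of_apply, hd1]
      rw [hmat]
      exact IH a₀ b₀ (fun k => ha _) (fun k => hb _) (fun k => hab _) n J hJ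

/-- Let `s ≥ 1` and let `a₁, …, a_s, b₁, …, b_s` be nonnegative reals with
`(a_k, b_k) ≠ (0,0)` for every `k`.  Then for every `t ≥ 0` and all column indices
`j₀ < ⋯ < j_t` in `ℕ`, there exist row indices `i₀ < ⋯ < i_t` with `j₀ ≤ i₀` and
`i_t ≤ j_t + s` such that the minor `det((W_s(a,b))_{i_r, j_{r'}})` is strictly positive. -/
theorem weightedPathMatrix_exists_pos_minor
    (s : ℕ) (hs : 1 ≤ s) (a b : Fin s → ℝ)
    (ha : ∀ k, 0 ≤ a k) (hb : ∀ k, 0 ≤ b k)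
    (hab : ∀ k, ¬(a k = 0 ∧ b k = 0))
    (t : ℕ) (col : Fin (t + 1) → ℕ) (hcol : StrictMono col) :
    ∃ row : Fin (t + 1) → ℕ, StrictMono row ∧
      col 0 ≤ row 0 ∧ row (Fin.last t) ≤ col (Fin.last t) + s ∧
      0 < (Matrix.of fun r r' : Fin (t + 1) =>
        weightedPathMatrix s a b (row r) (col r')).det := by
  classical
  set d := (Finset.univ.filter (fun k : Fin s => b k = 0)).card with hdd
  have hds : d ≤ s := by
    calc d ≤ (Finset.univ : Finset (Fin s)).card := Finset.card_filter_le _ _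
      _ = s := by simp
  refine ⟨fun r => col r + d, ?_, ?_, ?_, ?_⟩
  · intro x y h
    have := hcol h
    dsimp only
    omega
  · exact Nat.le_add_right _ _
  · dsimp only
    omega
  · exact wpm_pos s a b ha hb hab (t+1) col hcol
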